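/- Let X = [0,j]_ℤ × [0,k]_ℤ ⊆ ℤ² with c₁-adjacency, and let A = {(0,0),(0,k),(j,0),(j,k)} be the set of corners of X. Then (X,c₁) is (A,m,m)-limited for every m ∈ ℕ. -/

import Mathlib

/-- A function between digital images (graphs) is digitally continuous if adjacent
points map to equal or adjacent points. -/
def DigContinuous {V W : Type*} (G : SimpleGraph V) (H : SimpleGraph W) (f : V → W) : Prop :=
  ∀ x y : V, G.Adj x y → f x = f y ∨ H.Adj (f x) (f y)

/-- `f` restricted to `A` is an `m`-map: it moves each point of `A` a graph distance of at
most `m`. -/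
def IsMMapOn {V : Type*} (G : SimpleGraph V) (f : V → V) (A : Set V) (m : ℕ) : Prop :=
  ∀ a ∈ A, G.dist a (f a) ≤ m

/-- `A` is an `(m,n)`-limiting set for `(X,κ)`: every continuous self-map whose restriction
to `A` is an `m`-map is an `n`-map. -/
def IsLimiting {V : Type*} (G : SimpleGraph V) (A : Set V) (m n : ℕ) : Prop :=
  ∀ f : V → V, DigContinuous G G f → IsMMapOn G f A m → IsMMapOn G f Set.univ n

/-- `A` is a minimal `(m,n)`-limiting set: it is limiting and no proper subset is. -/
def IsMinimalLimiting {V : Type*} (G : SimpleGraph V) (A : Set V) (m n : ℕ) : Prop :=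
  IsLimiting G A m n ∧ ∀ B : Set V, B ⊂ A → ¬ IsLimiting G B m n

/-- The digital rectangle `[0,j]_ℤ × [0,k]_ℤ` with `c₁`-adjacency. -/
def rectC1 (j k : ℤ) : SimpleGraph (Set.Icc (0 : ℤ) j ×ˢ Set.Icc (0 : ℤ) k) where
  Adj p q := |(p : ℤ × ℤ).1 - (q : ℤ × ℤ).1| + |(p : ℤ × ℤ).2 - (q : ℤ × ℤ).2| = 1
  symm := by
    constructor
    intro p q h
    simpa [abs_sub_comm] using h
  loopless := by
    constructor
    intro p h
    simp at h

def Dz (p q : ℤ × ℤ) : ℕ := (p.1 - q.1).natAbs + (p.2 - q.2).natAbs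

lemma Dz_triangle (a b c : ℤ × ℤ) : Dz a c ≤ Dz a b + Dz b c := by
  unfold Dz; omega

lemma adj_iff (j k : ℤ) (p q : ↥(Set.Icc (0 : ℤ) j ×ˢ Set.Icc (0 : ℤ) k)) :
    (rectC1 j k).Adj p q ↔ Dz p.val q.val = 1 := by
  show |(p : ℤ × ℤ).1 - (q : ℤ × ℤ).1| + |(p : ℤ × ℤ).2 - (q : ℤ × ℤ).2| = 1 ↔ _
  rw [Int.abs_eq_natAbs, Int.abs_eq_natAbs]
  unfold Dz
  omega

lemma step (j k : ℤ) (x y : ↥(Set.Icc (0 : ℤ) j ×ˢ Set.Icc (0 : ℤ) k))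
    (h : Dz x.val y.val ≠ 0) :
    ∃ x' : ↥(Set.Icc (0 : ℤ) j ×ˢ Set.Icc (0 : ℤ) k),
      (rectC1 j k).Adj x x' ∧ Dz x'.val y.val + 1 = Dz x.val y.val := by
  have hx := x.prop
  have hy := y.prop
  simp only [Set.mem_prod, Set.mem_Icc] at hx hy
  by_cases h1 : x.val.1 = y.val.1
  · have h2 : x.val.2 ≠ y.val.2 := by unfold Dz at h; omega
    refine ⟨⟨(x.val.1, if x.val.2 < y.val.2 then x.val.2 + 1 else x.val.2 - 1), ?_⟩, ?_, ?_⟩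
    · simp only [Set.mem_prod, Set.mem_Icc]
      split_ifs <;> omega
    · rw [adj_iff]
      unfold Dz
      simp only
      split_ifs <;> omega
    · unfold Dz
      simp only
      split_ifs <;> omega
  · refine ⟨⟨(if x.val.1 < y.val.1 then x.val.1 + 1 else x.val.1 - 1, x.val.2), ?_⟩, ?_, ?_⟩
    · simp only [Set.mem_prod, Set.mem_Icc]
      split_ifs <;> omega
    · rw [adj_iff]
      unfold Dz
      simp only
      split_ifs <;> omega
    · unfold Dz
      simp only
      split_ifs <;> omega

lemma eq_of_Dz_zero (j k : ℤ) (x y : ↥(Set.Icc (0 : ℤ) j ×ˢ Set.Icc (0 : ℤ) k))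
    (h : Dz x.val y.val = 0) : x = y := by
  have h1 : x.val.1 = y.val.1 := by unfold Dz at h; omega
  have h2 : x.val.2 = y.val.2 := by unfold Dz at h; omega
  exact Subtype.ext (Prod.ext h1 h2)

lemma exists_walk (j k : ℤ) (n : ℕ) :
    ∀ x y : ↥(Set.Icc (0 : ℤ) j ×ˢ Set.Icc (0 : ℤ) k), Dz x.val y.val = n →
      ∃ w : (rectC1 j k).Walk x y, w.length = n := by
  induction n with
  | zero =>
    intro x y h
    obtain rfl := eq_of_Dz_zero j k x y h
    exact ⟨.nil, rfl⟩
  | succ n ih =>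
    intro x y h
    obtain ⟨x', hadj, hd⟩ := step j k x y (by omega)
    obtain ⟨w, hw⟩ := ih x' y (by omega)
    exact ⟨.cons hadj w, by simp [hw]⟩

lemma lip (j k : ℤ) (f : ↥(Set.Icc (0 : ℤ) j ×ˢ Set.Icc (0 : ℤ) k) → ↥(Set.Icc (0 : ℤ) j ×ˢ Set.Icc (0 : ℤ) k))
    (hf : DigContinuous (rectC1 j k) (rectC1 j k) f) (n : ℕ) :
    ∀ x y, Dz x.val y.val = n → Dz (f x).val (f y).val ≤ n := by
  induction n with
  | zero =>
    intro x y h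
    obtain rfl := eq_of_Dz_zero j k x y h
    unfold Dz; omega
  | succ n ih =>
    intro x y h
    obtain ⟨x', hadj, hd⟩ := step j k x y (by omega)
    have h1 : Dz (f x).val (f x').val ≤ 1 := by
      rcases hf x x' hadj with he | ha
      · rw [he]; unfold Dz; omega
      · exact le_of_eq ((adj_iff j k _ _).mp ha)
    have h2 := ih x' y (by omega)
    have := Dz_triangle (f x).val (f x').val (f y).val
    omega

lemma Dz_le_length (j k : ℤ) :
    ∀ {x y : ↥(Set.Icc (0 : ℤ) j ×ˢ Set.Icc (0 : ℤ) k)} (w : (rectC1 j k).Walk x y),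
      Dz x.val y.val ≤ w.length := by
  intro x y w
  induction w with
  | nil => unfold Dz; omega
  | @cons a b c hab w ih =>
    have h1 := (adj_iff j k a b).mp hab
    have := Dz_triangle a.val b.val c.val
    simp only [SimpleGraph.Walk.length_cons]
    omega

lemma dist_eq (j k : ℤ) (x y : ↥(Set.Icc (0 : ℤ) j ×ˢ Set.Icc (0 : ℤ) k)) :
    (rectC1 j k).dist x y = Dz x.val y.val := by
  obtain ⟨w, hw⟩ := exists_walk j k (Dz x.val y.val) x y rfl
  have h1 : (rectC1 j k).dist x y ≤ Dz x.val y.val := hw ▸ SimpleGraph.dist_le w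
  have reach : (rectC1 j k).Reachable x y := ⟨w⟩
  obtain ⟨w', hw'⟩ := reach.exists_walk_length_eq_dist
  have h2 := Dz_le_length j k w'
  omega


lemma corner_bound (m : ℕ) (p q u v a1 a2 c1 c2 : ℤ)
    (h : (c1 - a1).natAbs + (c2 - a2).natAbs ≤ m)
    (l : (u - a1).natAbs + (v - a2).natAbs ≤ (p - c1).natAbs + (q - c2).natAbs) :
    (u - c1).natAbs + (v - c2).natAbs ≤ (p - c1).natAbs + (q - c2).natAbs + m := by omega

lemma final_calc (m : ℕ) (j k p q u v : ℤ) (hp : 0 ≤ p) (hpj : p ≤ j) (hq : 0 ≤ q)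
    (hqk : q ≤ k) (hu : 0 ≤ u) (huj : u ≤ j) (hv : 0 ≤ v) (hvk : v ≤ k)
    (k1 : (u - 0).natAbs + (v - 0).natAbs ≤ (p - 0).natAbs + (q - 0).natAbs + m)
    (k2 : (u - 0).natAbs + (v - k).natAbs ≤ (p - 0).natAbs + (q - k).natAbs + m)
    (k3 : (u - j).natAbs + (v - 0).natAbs ≤ (p - j).natAbs + (q - 0).natAbs + m)
    (k4 : (u - j).natAbs + (v - k).natAbs ≤ (p - j).natAbs + (q - k).natAbs + m) :
    (p - u).natAbs + (q - v).natAbs ≤ m := by omega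

set_option maxHeartbeats 1000000 in
theorem stmt10 (j k : ℤ) (hj : 0 ≤ j) (hk : 0 ≤ k) (m : ℕ) :
    IsLimiting (rectC1 j k)
      {p | (p : ℤ × ℤ) = (0, 0) ∨ (p : ℤ × ℤ) = (0, k) ∨
           (p : ℤ × ℤ) = (j, 0) ∨ (p : ℤ × ℤ) = (j, k)} m m := by
  intro f hf hA x _
  rw [dist_eq]
  let c00 : ↥(Set.Icc (0 : ℤ) j ×ˢ Set.Icc (0 : ℤ) k) :=
    ⟨(0, 0), Set.mem_prod.mpr ⟨Set.mem_Icc.mpr ⟨le_rfl, hj⟩, Set.mem_Icc.mpr ⟨le_rfl, hk⟩⟩⟩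
  let c0k : ↥(Set.Icc (0 : ℤ) j ×ˢ Set.Icc (0 : ℤ) k) :=
    ⟨(0, k), Set.mem_prod.mpr ⟨Set.mem_Icc.mpr ⟨le_rfl, hj⟩, Set.mem_Icc.mpr ⟨hk, le_rfl⟩⟩⟩
  let cj0 : ↥(Set.Icc (0 : ℤ) j ×ˢ Set.Icc (0 : ℤ) k) :=
    ⟨(j, 0), Set.mem_prod.mpr ⟨Set.mem_Icc.mpr ⟨hj, le_rfl⟩, Set.mem_Icc.mpr ⟨le_rfl, hk⟩⟩⟩
  let cjk : ↥(Set.Icc (0 : ℤ) j ×ˢ Set.Icc (0 : ℤ) k) :=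
    ⟨(j, k), Set.mem_prod.mpr ⟨Set.mem_Icc.mpr ⟨hj, le_rfl⟩, Set.mem_Icc.mpr ⟨hk, le_rfl⟩⟩⟩
  have h00 := hA c00 (Or.inl rfl)
  have h0k := hA c0k (Or.inr (Or.inl rfl))
  have hj0 := hA cj0 (Or.inr (Or.inr (Or.inl rfl)))
  have hjk := hA cjk (Or.inr (Or.inr (Or.inr rfl)))
  rw [dist_eq] at h00 h0k hj0 hjk
  have l00 := lip j k f hf _ x c00 rfl
  have l0k := lip j k f hf _ x c0k rfl
  have lj0 := lip j k f hf _ x cj0 rfl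
  have ljk := lip j k f hf _ x cjk rfl
  have bx := x.prop
  have bfx := (f x).prop
  have b00 := (f c00).prop
  have b0k := (f c0k).prop
  have bj0 := (f cj0).prop
  have bjk := (f cjk).prop
  simp only [Set.mem_prod, Set.mem_Icc] at bx bfx b00 b0k bj0 bjk
  simp only [Dz, c00, c0k, cj0, cjk] at h00 h0k hj0 hjk l00 l0k lj0 ljk ⊢
  have k1 := corner_bound m x.val.1 x.val.2 (f x).val.1 (f x).val.2
    (f c00).val.1 (f c00).val.2 0 0 h00 l00
  have k2 := corner_bound m x.val.1 x.val.2 (f x).val.1 (f x).val.2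
    (f c0k).val.1 (f c0k).val.2 0 k h0k l0k
  have k3 := corner_bound m x.val.1 x.val.2 (f x).val.1 (f x).val.2
    (f cj0).val.1 (f cj0).val.2 j 0 hj0 lj0
  have k4 := corner_bound m x.val.1 x.val.2 (f x).val.1 (f x).val.2
    (f cjk).val.1 (f cjk).val.2 j k hjk ljk
  exact final_calc m j k x.val.1 x.val.2 (f x).val.1 (f x).val.2
    bx.1.1 bx.1.2 bx.2.1 bx.2.2 bfx.1.1 bfx.1.2 bfx.2.1 bfx.2.2 k1 k2 k3 k4
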